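/- Let t > 0 and let H(s), for s ∈ (0,t), be a family of bounded operators on a complex Hilbert space E such that each H(s) is self-adjoint and positive (⟨H(s)x, x⟩ ≥ 0 for all x ∈ E), the operators pairwise commute (H(s₁)H(s₂) = H(s₂)H(s₁) for all s₁, s₂ ∈ (0,t)), s ↦ H(s) is Bochner integrable on (0,t), and let g : (0,t) → E be strongly measurable with s ↦ H(s)g(s) Bochner integrable and s ↦ ⟨H(s)g(s), g(s)⟩ integrable. Then ‖∫₀ᵗ H(s) g(s) ds‖² ≤ ‖∫₀ᵗ H(s) ds‖ · ∫₀ᵗ ⟨H(s) g(s), g(s)⟩ ds. -/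

import Mathlib

open MeasureTheory

lemma op_cs {E : Type*} [NormedAddCommGroup E] [InnerProductSpace ℂ E] [CompleteSpace E]
    (T : E →L[ℂ] E) (hsa : IsSelfAdjoint T)
    (hpos : ∀ x : E, 0 ≤ (inner ℂ (T x) x : ℂ).re) (x y : E) :
    ‖(inner ℂ (T x) y : ℂ)‖ ^ 2 ≤ (inner ℂ (T x) x : ℂ).re * (inner ℂ (T y) y : ℂ).re := by
  have hsymm : ∀ a b : E, (inner ℂ (T a) b : ℂ) = inner ℂ a (T b) :=
    fun a b => (ContinuousLinearMap.isSelfAdjoint_iff_isSymmetric.mp hsa) a b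
  let c : PreInnerProductSpace.Core ℂ E :=
  { inner := fun a b => inner ℂ a (T b)
    conj_inner_symm := fun a b => by simp only [← hsymm, inner_conj_symm]
    re_inner_nonneg := fun a => by simpa [← hsymm a a] using hpos a
    add_left := fun a b z => inner_add_left a b (T z)
    smul_left := fun a b r => inner_smul_left a (T b) r }
  have key := @InnerProductSpace.Core.inner_mul_inner_self_le ℂ E _ _ _ c x y
  have h2 : ‖(inner ℂ y (T x) : ℂ)‖ = ‖(inner ℂ x (T y) : ℂ)‖ := by
    rw [← inner_conj_symm, RCLike.norm_conj, hsymm]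
  calc ‖(inner ℂ (T x) y : ℂ)‖ ^ 2 = ‖(inner ℂ x (T y) : ℂ)‖ * ‖(inner ℂ y (T x) : ℂ)‖ := by
        rw [hsymm x y, sq, h2]
    _ ≤ RCLike.re (inner ℂ x (T x) : ℂ) * RCLike.re (inner ℂ y (T y) : ℂ) := key
    _ = (inner ℂ (T x) x : ℂ).re * (inner ℂ (T y) y : ℂ).re := by rw [← hsymm, ← hsymm]; rfl

theorem schwarz_like_inequality
    {E : Type*} [NormedAddCommGroup E] [InnerProductSpace ℂ E] [CompleteSpace E]
    (t : ℝ) (ht : 0 < t) (H : ℝ → (E →L[ℂ] E)) (g : ℝ → E)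
    (hsa : ∀ s ∈ Set.Ioo (0:ℝ) t, IsSelfAdjoint (H s))
    (hpos : ∀ s ∈ Set.Ioo (0:ℝ) t, ∀ x : E, 0 ≤ (inner ℂ ((H s) x) x : ℂ).re)
    (hcomm : ∀ s₁ ∈ Set.Ioo (0:ℝ) t, ∀ s₂ ∈ Set.Ioo (0:ℝ) t, Commute (H s₁) (H s₂))
    (hHint : IntegrableOn H (Set.Ioo 0 t))
    (hgmeas : AEStronglyMeasurable g (volume.restrict (Set.Ioo 0 t)))
    (hHg : IntegrableOn (fun s => (H s) (g s)) (Set.Ioo 0 t))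
    (hinner : IntegrableOn (fun s => (inner ℂ ((H s) (g s)) (g s) : ℂ).re) (Set.Ioo 0 t)) :
    ‖∫ s in Set.Ioo (0:ℝ) t, (H s) (g s)‖ ^ 2 ≤
      ‖∫ s in Set.Ioo (0:ℝ) t, H s‖ *
        ∫ s in Set.Ioo (0:ℝ) t, (inner ℂ ((H s) (g s)) (g s) : ℂ).re := by
  have re_symm : ∀ a b : E, (inner ℂ a b : ℂ).re = (inner ℂ b a : ℂ).re := by
    intro a b
    rw [← inner_conj_symm a b, Complex.conj_re]
  set S := Set.Ioo (0:ℝ) t with hS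
  set u : E := ∫ s in S, (H s) (g s) with hu
  set A : E →L[ℂ] E := ∫ s in S, H s with hA
  set f : ℝ → ℝ := fun s => (inner ℂ ((H s) (g s)) (g s) : ℂ).re with hf
  set h : ℝ → ℝ := fun s => (inner ℂ ((H s) u) u : ℂ).re with hh
  have hHu : IntegrableOn (fun s => (H s) u) S := hHint.apply_continuousLinearMap u
  have hhint : IntegrableOn h S := by
    have base : Integrable (fun s => RCLike.re (inner ℂ u ((H s) u) : ℂ)) (volume.restrict S) :=
      (hHu.const_inner u).re
    refine base.congr (Filter.Eventually.of_forall fun s => ?_)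
    simp only [hh, RCLike.re_to_complex]
    exact re_symm _ _
  have hf0 : 0 ≤ᵐ[volume.restrict S] f := by
    refine (ae_restrict_iff' measurableSet_Ioo).2 (ae_of_all _ fun s hs => ?_)
    exact hpos s hs (g s)
  have hh0 : 0 ≤ᵐ[volume.restrict S] h := by
    refine (ae_restrict_iff' measurableSet_Ioo).2 (ae_of_all _ fun s hs => ?_)
    exact hpos s hs u
  -- Step 1 : ‖u‖² = ∫ re ⟪H s (g s), u⟫
  have hnorm : ‖u‖ ^ 2 = ∫ s in S, (inner ℂ ((H s) (g s)) u : ℂ).re := by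
    have h1 : ∫ s in S, (inner ℂ ((H s) (g s)) u : ℂ).re
        = ∫ s in S, RCLike.re (inner ℂ u ((H s) (g s)) : ℂ) := by
      refine integral_congr_ae (Filter.Eventually.of_forall fun s => ?_)
      simp only [RCLike.re_to_complex]
      exact re_symm _ _
    rw [h1, integral_re (hHg.const_inner u), integral_inner hHg u, ← hu]
    exact (inner_self_eq_norm_sq (𝕜 := ℂ) u).symm
  -- Step 2 : pointwise bound
  have hptwise : ∀ᵐ s ∂(volume.restrict S),
      (inner ℂ ((H s) (g s)) u : ℂ).re ≤ Real.sqrt (f s) * Real.sqrt (h s) := by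
    refine (ae_restrict_iff' measurableSet_Ioo).2 (ae_of_all _ fun s hs => ?_)
    have hcs := op_cs (H s) (hsa s hs) (hpos s hs) (g s) u
    calc (inner ℂ ((H s) (g s)) u : ℂ).re ≤ ‖(inner ℂ ((H s) (g s)) u : ℂ)‖ :=
          Complex.re_le_norm _
      _ = Real.sqrt (‖(inner ℂ ((H s) (g s)) u : ℂ)‖ ^ 2) :=
          (Real.sqrt_sq (norm_nonneg _)).symm
      _ ≤ Real.sqrt (f s * h s) := Real.sqrt_le_sqrt hcs
      _ = Real.sqrt (f s) * Real.sqrt (h s) := Real.sqrt_mul (hpos s hs (g s)) _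
  -- measurability and MemLp facts
  have hfm : AEStronglyMeasurable f (volume.restrict S) := hinner.aestronglyMeasurable
  have hhm : AEStronglyMeasurable h (volume.restrict S) := hhint.aestronglyMeasurable
  have hsfm : AEStronglyMeasurable (fun s => Real.sqrt (f s)) (volume.restrict S) :=
    Real.continuous_sqrt.comp_aestronglyMeasurable hfm
  have hshm : AEStronglyMeasurable (fun s => Real.sqrt (h s)) (volume.restrict S) :=
    Real.continuous_sqrt.comp_aestronglyMeasurable hhm
  have hsf2 : MemLp (fun s => Real.sqrt (f s)) 2 (volume.restrict S) := by
    refine (memLp_two_iff_integrable_sq hsfm).2 ?_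
    refine hinner.congr ?_
    filter_upwards [hf0] with s hs
    exact (Real.sq_sqrt hs).symm
  have hsh2 : MemLp (fun s => Real.sqrt (h s)) 2 (volume.restrict S) := by
    refine (memLp_two_iff_integrable_sq hshm).2 ?_
    refine hhint.congr ?_
    filter_upwards [hh0] with s hs
    exact (Real.sq_sqrt hs).symm
  have hprod : Integrable (fun s => Real.sqrt (f s) * Real.sqrt (h s)) (volume.restrict S) := by
    have := hsh2.smul (φ := fun s => Real.sqrt (f s)) hsf2 (r := 1) (hpqr := ⟨by rw [inv_one]; exact ENNReal.inv_two_add_inv_two⟩)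
    rw [memLp_one_iff_integrable] at this
    exact this
  -- Hölder (Cauchy–Schwarz) inequality for integrals
  have hCS : ∫ s in S, Real.sqrt (f s) * Real.sqrt (h s) ≤
      Real.sqrt (∫ s in S, f s) * Real.sqrt (∫ s in S, h s) := by
    have hconj : Real.HolderConjugate 2 2 := Real.HolderConjugate.two_two
    have h2 : ENNReal.ofReal (2:ℝ) = 2 := by
      rw [ENNReal.ofReal_ofNat]
    have sqf0 : 0 ≤ᵐ[volume.restrict S] fun s => Real.sqrt (f s) :=
      ae_of_all _ fun s => Real.sqrt_nonneg _
    have sqh0 : 0 ≤ᵐ[volume.restrict S] fun s => Real.sqrt (h s) :=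
      ae_of_all _ fun s => Real.sqrt_nonneg _
    have key := integral_mul_le_Lp_mul_Lq_of_nonneg hconj sqf0 sqh0
      (h2 ▸ hsf2) (h2 ▸ hsh2)
    have ef : ∫ s in S, Real.sqrt (f s) ^ (2:ℝ) = ∫ s in S, f s := by
      refine integral_congr_ae ?_
      filter_upwards [hf0] with s hs
      rw [Real.rpow_two, Real.sq_sqrt hs]
    have eh : ∫ s in S, Real.sqrt (h s) ^ (2:ℝ) = ∫ s in S, h s := by
      refine integral_congr_ae ?_
      filter_upwards [hh0] with s hs
      rw [Real.rpow_two, Real.sq_sqrt hs]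
    rw [ef, eh] at key
    rw [Real.sqrt_eq_rpow, Real.sqrt_eq_rpow]
    exact key
  -- the second integral is controlled by ‖A‖ ‖u‖²
  have hJ : ∫ s in S, h s ≤ ‖A‖ * ‖u‖ ^ 2 := by
    have e1 : ∫ s in S, h s = RCLike.re (inner ℂ u (A u) : ℂ) := by
      have h1 : ∫ s in S, h s = ∫ s in S, RCLike.re (inner ℂ u ((H s) u) : ℂ) := by
        refine integral_congr_ae (ae_of_all _ fun s => ?_)
        simp only [hh, RCLike.re_to_complex]
        exact re_symm _ _
      rw [h1, integral_re (hHu.const_inner u), integral_inner hHu u]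
      congr 2
      exact (ContinuousLinearMap.integral_apply hHint u).symm
    rw [e1]
    calc RCLike.re (inner ℂ u (A u) : ℂ) ≤ ‖(inner ℂ u (A u) : ℂ)‖ := RCLike.re_le_norm _
      _ ≤ ‖u‖ * ‖A u‖ := norm_inner_le_norm _ _
      _ ≤ ‖u‖ * (‖A‖ * ‖u‖) := mul_le_mul_of_nonneg_left (A.le_opNorm u) (norm_nonneg u)
      _ = ‖A‖ * ‖u‖ ^ 2 := by ring
  have I0 : 0 ≤ ∫ s in S, f s := integral_nonneg_of_ae hf0
  have hintL : Integrable (fun s => (inner ℂ ((H s) (g s)) u : ℂ).re) (volume.restrict S) := by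
    have base : Integrable (fun s => RCLike.re (inner ℂ ((H s) (g s)) u : ℂ))
        (volume.restrict S) := (hHg.inner_const u).re
    exact base.congr (ae_of_all _ fun s => rfl)
  have main : ‖u‖ ^ 2 ≤ Real.sqrt (∫ s in S, f s) * Real.sqrt (‖A‖ * ‖u‖ ^ 2) := by
    calc ‖u‖ ^ 2 = ∫ s in S, (inner ℂ ((H s) (g s)) u : ℂ).re := hnorm
      _ ≤ ∫ s in S, Real.sqrt (f s) * Real.sqrt (h s) :=
          integral_mono_ae hintL hprod hptwise
      _ ≤ Real.sqrt (∫ s in S, f s) * Real.sqrt (∫ s in S, h s) := hCS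
      _ ≤ Real.sqrt (∫ s in S, f s) * Real.sqrt (‖A‖ * ‖u‖ ^ 2) :=
          mul_le_mul_of_nonneg_left (Real.sqrt_le_sqrt hJ) (Real.sqrt_nonneg _)
  have hNI : Real.sqrt (‖A‖ * ‖u‖ ^ 2) = Real.sqrt ‖A‖ * ‖u‖ := by
    rw [Real.sqrt_mul (norm_nonneg A), Real.sqrt_sq (norm_nonneg u)]
  rcases eq_or_ne (‖u‖) 0 with hz | hz
  · rw [hz]
    simpa using mul_nonneg (norm_nonneg A) I0
  · have hupos : 0 < ‖u‖ := lt_of_le_of_ne (norm_nonneg u) (Ne.symm hz)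
    rw [hNI] at main
    have h3 : ‖u‖ ≤ Real.sqrt (∫ s in S, f s) * Real.sqrt ‖A‖ := by
      have h2 : ‖u‖ * ‖u‖ ≤ (Real.sqrt (∫ s in S, f s) * Real.sqrt ‖A‖) * ‖u‖ := by
        calc ‖u‖ * ‖u‖ = ‖u‖ ^ 2 := (sq ‖u‖).symm
          _ ≤ Real.sqrt (∫ s in S, f s) * (Real.sqrt ‖A‖ * ‖u‖) := main
          _ = (Real.sqrt (∫ s in S, f s) * Real.sqrt ‖A‖) * ‖u‖ := by ring
      exact le_of_mul_le_mul_right h2 hupos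
    calc ‖u‖ ^ 2 ≤ (Real.sqrt (∫ s in S, f s) * Real.sqrt ‖A‖) ^ 2 := by
          rw [sq, sq]
          exact mul_le_mul h3 h3 (norm_nonneg u)
            (mul_nonneg (Real.sqrt_nonneg _) (Real.sqrt_nonneg _))
      _ = ‖A‖ * ∫ s in S, f s := by
          rw [mul_pow, Real.sq_sqrt I0, Real.sq_sqrt (norm_nonneg A)]
          ring
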